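/- Let G = (V, E) be a hypergraph. Then the following three subsets of ℝ^{E∪S} are equal: (i) the extended flower relaxation flowerRel(G); (ii) the intersection of the projected relaxations P_E(D) over all recursive linearizations D of G; (iii) the intersection of the projected relaxations P_E(D) over all recursive McCormick linearizations D of G. -/

import Mathlib

open Finset

/-- A set `I` is a singleton `{v}`. -/
def IsSingleton {V : Type} (I : Finset V) : Prop := ∃ v : V, I = {v}

instance {V : Type} [DecidableEq V] [Fintype V] (I : Finset V) :
    Decidable (IsSingleton I) :=
  inferInstanceAs (Decidable (∃ v : V, I = {v}))

/-- The successors of node `I` in the arc set `A`. -/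
def succOf {V : Type} [DecidableEq V] (A : Finset (Finset V × Finset V))
    (I : Finset V) : Finset (Finset V) :=
  (A.filter fun a => a.1 = I).image Prod.snd

/-- A recursive linearization over the finite ground set `V`: a simple digraph whose
nodes are nonempty subsets of `V` including all singletons, where each arc goes from a
set to a subset, and the successors of every non-singleton node cover it. -/
structure RecLin (V : Type) [Fintype V] [DecidableEq V] where
  nodes : Finset (Finset V)
  arcs : Finset (Finset V × Finset V)
  arcs_fst_mem : ∀ a ∈ arcs, a.1 ∈ nodes
  arcs_snd_mem : ∀ a ∈ arcs, a.2 ∈ nodes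
  no_loops : ∀ a ∈ arcs, a.1 ≠ a.2
  singleton_mem : ∀ v : V, ({v} : Finset V) ∈ nodes
  nodes_nonempty : ∀ I ∈ nodes, I.Nonempty
  arcs_subset : ∀ a ∈ arcs, a.2 ⊆ a.1
  succ_union : ∀ I ∈ nodes, ¬ IsSingleton I → (succOf arcs I).biUnion id = I

/-- The relaxation `P(D)` of a recursive linearization, as a subset of `ℝ^{Finset V}`
constraining only the coordinates indexed by nodes of `D`. -/
def relax {V : Type} [Fintype V] [DecidableEq V] (D : RecLin V) :
    Set (Finset V → ℝ) :=
  { z | (∀ I ∈ D.nodes, 0 ≤ z I ∧ z I ≤ 1)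
      ∧ (∀ a ∈ D.arcs, z a.1 ≤ z a.2)
      ∧ (∀ I ∈ D.nodes, ¬ IsSingleton I →
          z I + ∑ J ∈ succOf D.arcs I, (1 - z J) ≥ 1) }

/-- The projected relaxation `P_T(D)`: the orthogonal projection of `P(D)` onto the
coordinates indexed by `T ∪ S` (`S` = singletons). -/
def projRelax {V : Type} [Fintype V] [DecidableEq V] (D : RecLin V)
    (T : Finset (Finset V)) : Set (Finset V → ℝ) :=
  { z | ∃ w ∈ relax D, ∀ I : Finset V, (I ∈ T ∨ IsSingleton I) → w I = z I }

/-- `D` is a recursive linearization of the hypergraph `G = (V, E)`. -/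
def RecLinOf {V : Type} [Fintype V] [DecidableEq V] (D : RecLin V)
    (E : Finset (Finset V)) : Prop :=
  E ⊆ D.nodes ∧ ∀ I ∈ D.nodes, (∀ a ∈ D.arcs, a.2 ≠ I) → (I ∈ E ∨ IsSingleton I)

/-- `D` is partitioning: the successors of every node are pairwise disjoint. -/
def Partitioning {V : Type} [Fintype V] [DecidableEq V] (D : RecLin V) : Prop :=
  ∀ I ∈ D.nodes, ∀ J ∈ succOf D.arcs I, ∀ J' ∈ succOf D.arcs I, J ≠ J' → J ∩ J' = ∅

/-- `D` is binary: every non-singleton node has exactly two successors. -/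
def Binary {V : Type} [Fintype V] [DecidableEq V] (D : RecLin V) : Prop :=
  ∀ I ∈ D.nodes, ¬ IsSingleton I → (succOf D.arcs I).card = 2

/-- A recursive McCormick linearization is partitioning and binary. -/
def McCormick {V : Type} [Fintype V] [DecidableEq V] (D : RecLin V) : Prop :=
  Partitioning D ∧ Binary D

/-- The extended flower relaxation of the hypergraph `G = (V, E)`, as a subset of
`ℝ^{Finset V}` constraining only the coordinates indexed by `E ∪ S`. -/
def flowerRel {V : Type} [Fintype V] [DecidableEq V] (E : Finset (Finset V)) :
    Set (Finset V → ℝ) :=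
  { z | (∀ I : Finset V, (I ∈ E ∨ IsSingleton I) → 0 ≤ z I ∧ z I ≤ 1)
      ∧ (∀ I ∈ E, ∀ v ∈ I, z I ≤ z {v})
      ∧ (∀ I ∈ E, ∀ k : ℕ, ∀ J : Fin k → Finset V,
          (∀ i, J i ∈ E ∨ IsSingleton (J i)) →
          I ⊆ Finset.univ.biUnion J →
          (∀ i, (J i ∩ I).Nonempty) →
          z I + ∑ i, (1 - z (J i)) ≥ 1) }

/-- The multilinear polytope `ML(G)`: the convex hull of the 0/1 points whose
`E`-coordinates are the products of the corresponding singleton coordinates. -/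
def ML {V : Type} [Fintype V] [DecidableEq V] (E : Finset (Finset V)) :
    Set (Finset V → ℝ) :=
  convexHull ℝ { z : Finset V → ℝ |
    (∀ I : Finset V, (I ∈ E ∨ IsSingleton I) → z I = 0 ∨ z I = 1)
    ∧ ∀ I ∈ E, z I = ∏ v ∈ I, z {v} }

set_option linter.unusedSectionVars false
set_option linter.unusedVariables false
set_option maxHeartbeats 1000000

namespace FlowerPf

variable {V : Type} [Fintype V] [DecidableEq V]

def singles (V : Type) [Fintype V] [DecidableEq V] : Finset (Finset V) :=
  Finset.univ.image (fun v => ({v} : Finset V))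

lemma mem_singles {I : Finset V} : I ∈ singles V ↔ IsSingleton I := by
  simp [singles, IsSingleton, eq_comm]

lemma mem_succOf {A : Finset (Finset V × Finset V)} {I J : Finset V} :
    J ∈ succOf A I ↔ ∃ a ∈ A, a.1 = I ∧ a.2 = J := by
  simp only [succOf, mem_image, mem_filter]
  constructor
  · rintro ⟨a, ⟨ha, h1⟩, h2⟩; exact ⟨a, ha, h1, h2⟩
  · rintro ⟨a, ha, h1, h2⟩; exact ⟨a, ⟨ha, h1⟩, h2⟩

section ExtW

variable (E : Finset (Finset V))

def cands (I : Finset V) : Finset (Finset (Finset V)) :=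
  ((E ∪ singles V).powerset).filter
    (fun F => I ⊆ F.biUnion id ∧ ∀ J ∈ F, (J ∩ I).Nonempty)

def val (z : Finset V → ℝ) (F : Finset (Finset V)) : ℝ := 1 - ∑ J ∈ F, (1 - z J)

noncomputable def extW (z : Finset V → ℝ) (I : Finset V) : ℝ :=
  if I ∈ E ∨ IsSingleton I then z I else (cands E I).fold max 0 (val z)

variable {E}

lemma mem_cands {I : Finset V} {F : Finset (Finset V)} :
    F ∈ cands E I ↔ (∀ J ∈ F, J ∈ E ∨ IsSingleton J) ∧ I ⊆ F.biUnion id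
      ∧ ∀ J ∈ F, (J ∩ I).Nonempty := by
  simp only [cands, mem_filter, mem_powerset, and_assoc]
  constructor
  · rintro ⟨h1, h2, h3⟩
    exact ⟨fun J hJ => by simpa [mem_singles] using (mem_union.mp (h1 hJ)), h2, h3⟩
  · rintro ⟨h1, h2, h3⟩
    exact ⟨fun J hJ => mem_union.mpr (by simpa [mem_singles] using h1 J hJ), h2, h3⟩

variable {z : Finset V → ℝ} (hz : z ∈ flowerRel E)
include hz

lemma flower_finset {I : Finset V} (hI : I ∈ E) {F : Finset (Finset V)}
    (hF : F ∈ cands E I) : val z F ≤ z I := by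
  obtain ⟨hFE, hcov, hint⟩ := mem_cands.mp hF
  classical
  set k := F.card with hk
  set e : {x // x ∈ F} ≃ Fin k := F.equivFin with he
  set Jf : Fin k → Finset V := fun i => ((e.symm i : {x // x ∈ F}) : Finset V) with hJf
  have hmem : ∀ i, Jf i ∈ F := fun i => (e.symm i).2
  have hcov' : I ⊆ Finset.univ.biUnion Jf := by
    intro v hv
    rcases Finset.mem_biUnion.mp (hcov hv) with ⟨J, hJ, hvJ⟩
    refine Finset.mem_biUnion.mpr ⟨e ⟨J, hJ⟩, Finset.mem_univ _, ?_⟩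
    simpa [hJf] using hvJ
  have key := hz.2.2 I hI k Jf (fun i => hFE _ (hmem i)) hcov' (fun i => hint _ (hmem i))
  have hsum : ∑ i, (1 - z (Jf i)) = ∑ J ∈ F, (1 - z J) := by
    rw [← Finset.sum_attach F (fun J => 1 - z J), ← Finset.univ_eq_attach]
    exact (Equiv.sum_comp e.symm (fun x : {x // x ∈ F} => 1 - z ↑x))
  rw [hsum] at key
  simp only [val]
  linarith

lemma singleton_bound (v : V) {F : Finset (Finset V)}
    (hF : F ∈ cands E {v}) : val z F ≤ z {v} := by
  obtain ⟨hFE, hcov, _⟩ := mem_cands.mp hF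
  obtain ⟨J, hJF, hvJ⟩ := Finset.mem_biUnion.mp (hcov (Finset.mem_singleton_self v))
  have hvJ' : v ∈ J := hvJ
  have h1 : ∀ K ∈ F, (0:ℝ) ≤ 1 - z K := fun K hK => by
    have := (hz.1 K (hFE K hK)).2; linarith
  have h2 : (1:ℝ) - z J ≤ ∑ K ∈ F, (1 - z K) := Finset.single_le_sum h1 hJF
  have h3 : z J ≤ z {v} := by
    rcases hFE J hJF with hJE | ⟨u, rfl⟩
    · exact hz.2.1 J hJE v hvJ'
    · have huv : v = u := by simpa using hvJ'
      subst huv; exact le_rfl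
  simp only [val]
  linarith

lemma val_le_extW (I : Finset V) {F : Finset (Finset V)} (hF : F ∈ cands E I) :
    val z F ≤ extW E z I := by
  unfold extW
  split_ifs with h
  · rcases h with hI | ⟨v, rfl⟩
    · exact flower_finset hz hI hF
    · exact singleton_bound hz v hF
  · exact (Finset.le_fold_max _).mpr (Or.inr ⟨F, hF, le_rfl⟩)

lemma extW_nonneg (I : Finset V) : 0 ≤ extW E z I := by
  unfold extW
  split_ifs with h
  · exact (hz.1 I h).1
  · exact (Finset.le_fold_max _).mpr (Or.inl le_rfl)

lemma val_le_one {I : Finset V} {F : Finset (Finset V)} (hF : F ∈ cands E I) :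
    val z F ≤ 1 := by
  obtain ⟨hFE, _, _⟩ := mem_cands.mp hF
  have : (0:ℝ) ≤ ∑ K ∈ F, (1 - z K) :=
    Finset.sum_nonneg fun K hK => by have := (hz.1 K (hFE K hK)).2; linarith
  simp only [val]; linarith

lemma extW_le_one (I : Finset V) : extW E z I ≤ 1 := by
  unfold extW
  split_ifs with h
  · exact (hz.1 I h).2
  · exact (Finset.fold_max_le _).mpr ⟨zero_le_one, fun F hF => val_le_one hz hF⟩

omit hz in
lemma self_mem_cands {I : Finset V} (hI : I ∈ E ∨ IsSingleton I) (hne : I.Nonempty) :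
    {I} ∈ cands E I := by
  refine mem_cands.mpr ⟨fun J hJ => by rwa [Finset.mem_singleton.mp hJ], ?_, ?_⟩
  · intro v hv; exact Finset.mem_biUnion.mpr ⟨I, Finset.mem_singleton_self I, hv⟩
  · intro J hJ; rw [Finset.mem_singleton.mp hJ, Finset.inter_self]; exact hne

lemma exists_opt {I : Finset V} (hne : I.Nonempty) (hpos : 0 < extW E z I) :
    ∃ F ∈ cands E I, extW E z I ≤ val z F := by
  by_cases h : I ∈ E ∨ IsSingleton I
  · refine ⟨{I}, self_mem_cands h hne, ?_⟩
    unfold extW; rw [if_pos h]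
    simp [val]
  · unfold extW at hpos ⊢
    rw [if_neg h] at hpos ⊢
    rcases (Finset.le_fold_max _).mp (le_refl ((cands E I).fold max 0 (val z))) with h0 | hF
    · linarith
    · exact hF

lemma arc_mono {I J : Finset V} (hJI : J ⊆ I) (hJne : J.Nonempty) :
    extW E z I ≤ extW E z J := by
  by_cases hp : 0 < extW E z I
  · obtain ⟨F, hF, hle⟩ := exists_opt hz (hJne.mono hJI) hp
    obtain ⟨hFE, hcov, hint⟩ := mem_cands.mp hF
    set F' := F.filter (fun K => (K ∩ J).Nonempty) with hF'def
    have hF' : F' ∈ cands E J := by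
      refine mem_cands.mpr ⟨fun K hK => hFE K (Finset.mem_of_mem_filter K hK), ?_, ?_⟩
      · intro v hv
        rcases Finset.mem_biUnion.mp (hcov (hJI hv)) with ⟨K, hKF, hvK⟩
        refine Finset.mem_biUnion.mpr ⟨K, ?_, hvK⟩
        exact Finset.mem_filter.mpr ⟨hKF, ⟨v, Finset.mem_inter.mpr ⟨hvK, hv⟩⟩⟩
      · intro K hK; exact (Finset.mem_filter.mp hK).2
    have hval : val z F ≤ val z F' := by
      have hsub : F' ⊆ F := Finset.filter_subset _ _
      have : ∑ K ∈ F', (1 - z K) ≤ ∑ K ∈ F, (1 - z K) :=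
        Finset.sum_le_sum_of_subset_of_nonneg hsub
          (fun K hK _ => by have := (hz.1 K (hFE K hK)).2; linarith)
      simp only [val]; linarith
    exact hle.trans (hval.trans (val_le_extW hz J hF'))
  · push_neg at hp
    exact hp.trans (extW_nonneg hz J)

omit hz in
lemma sum_biUnion_le {α : Type*} [DecidableEq α] {β : Type*} [DecidableEq β]
    (s : Finset α) (t : α → Finset β) (f : β → ℝ) (hf : ∀ b ∈ s.biUnion t, 0 ≤ f b) :
    ∑ b ∈ s.biUnion t, f b ≤ ∑ a ∈ s, ∑ b ∈ t a, f b := by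
  classical
  induction s using Finset.induction_on with
  | empty => simp
  | insert a s ha ih =>
    have hfa : ∀ b ∈ t a, 0 ≤ f b := fun b hb =>
      hf b (by rw [Finset.biUnion_insert]; exact Finset.mem_union_left _ hb)
    have hfs : ∀ b ∈ s.biUnion t, 0 ≤ f b := fun b hb =>
      hf b (by rw [Finset.biUnion_insert]; exact Finset.mem_union_right _ hb)
    rw [Finset.biUnion_insert, Finset.sum_insert ha]
    have h1 : ∑ b ∈ t a ∪ s.biUnion t, f b
        ≤ ∑ b ∈ t a, f b + ∑ b ∈ s.biUnion t, f b := by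
      have := Finset.sum_union_inter (s₁ := t a) (s₂ := s.biUnion t) (f := f)
      have hnn : (0:ℝ) ≤ ∑ b ∈ t a ∩ s.biUnion t, f b :=
        Finset.sum_nonneg fun b hb => hfs b (Finset.mem_of_mem_inter_right hb)
      linarith
    have h2 := ih hfs
    linarith

lemma node_flower {I : Finset V} (hns : ¬ IsSingleton I) (succ : Finset (Finset V))
    (hsub : ∀ J ∈ succ, J ⊆ I) (hne : ∀ J ∈ succ, J.Nonempty)
    (hun : succ.biUnion id = I) :
    extW E z I + ∑ J ∈ succ, (1 - extW E z J) ≥ 1 := by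
  classical
  by_cases hneg : ∃ J₀ ∈ succ, extW E z J₀ ≤ 0
  · obtain ⟨J₀, hJ₀, h0⟩ := hneg
    have hterm : ∀ J ∈ succ, (0:ℝ) ≤ 1 - extW E z J := fun J hJ => by
      have := extW_le_one hz (I := J); linarith
    have h1 : (1:ℝ) - extW E z J₀ ≤ ∑ J ∈ succ, (1 - extW E z J) :=
      Finset.single_le_sum hterm hJ₀
    have h2 := extW_nonneg hz (I := I)
    linarith
  · push_neg at hneg
    have hex : ∀ J ∈ succ, ∃ F ∈ cands E J, extW E z J ≤ val z F :=
      fun J hJ => exists_opt hz (hne J hJ) (hneg J hJ)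
    set g : Finset V → Finset (Finset V) := fun J =>
      if h : ∃ F ∈ cands E J, extW E z J ≤ val z F then h.choose else ∅ with hg
    have hg1 : ∀ J ∈ succ, g J ∈ cands E J ∧ extW E z J ≤ val z (g J) := by
      intro J hJ
      have h := hex J hJ
      rw [hg]; simp only [dif_pos h]
      exact ⟨h.choose_spec.1, h.choose_spec.2⟩
    set F := succ.biUnion g with hF
    have hFc : F ∈ cands E I := by
      refine mem_cands.mpr ⟨?_, ?_, ?_⟩
      · intro K hK
        obtain ⟨J, hJ, hKJ⟩ := Finset.mem_biUnion.mp hK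
        exact (mem_cands.mp (hg1 J hJ).1).1 K hKJ
      · intro v hv
        rw [← hun] at hv
        obtain ⟨J, hJ, hvJ⟩ := Finset.mem_biUnion.mp hv
        have hvJ' : v ∈ J := hvJ
        obtain ⟨K, hKJ, hvK⟩ :=
          Finset.mem_biUnion.mp ((mem_cands.mp (hg1 J hJ).1).2.1 hvJ')
        exact Finset.mem_biUnion.mpr ⟨K, Finset.mem_biUnion.mpr ⟨J, hJ, hKJ⟩, hvK⟩
      · intro K hK
        obtain ⟨J, hJ, hKJ⟩ := Finset.mem_biUnion.mp hK
        obtain ⟨v, hv⟩ := (mem_cands.mp (hg1 J hJ).1).2.2 K hKJ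
        rcases Finset.mem_inter.mp hv with ⟨hv1, hv2⟩
        exact ⟨v, Finset.mem_inter.mpr ⟨hv1, hsub J hJ hv2⟩⟩
    have h1 : val z F ≤ extW E z I := val_le_extW hz I hFc
    have hzK1 : ∀ K ∈ F, (0:ℝ) ≤ 1 - z K := fun K hK => by
      have := (hz.1 K ((mem_cands.mp hFc).1 K hK)).2; linarith
    have h2 : ∑ K ∈ F, (1 - z K) ≤ ∑ J ∈ succ, ∑ K ∈ g J, (1 - z K) := by
      rw [hF]
      refine sum_biUnion_le succ g (fun K => 1 - z K) ?_
      rw [← hF]; exact hzK1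
    have h3 : ∀ J ∈ succ, ∑ K ∈ g J, (1 - z K) = 1 - val z (g J) := by
      intro J hJ; simp [val]
    have h4 : ∑ J ∈ succ, (1 - val z (g J)) ≤ ∑ J ∈ succ, (1 - extW E z J) :=
      Finset.sum_le_sum fun J hJ => by have := (hg1 J hJ).2; linarith
    have h5 : ∑ J ∈ succ, ∑ K ∈ g J, (1 - z K) = ∑ J ∈ succ, (1 - val z (g J)) :=
      Finset.sum_congr rfl h3
    simp only [val] at h1
    linarith
end ExtW

lemma flower_subset_proj {E : Finset (Finset V)} {z : Finset V → ℝ}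
    (hz : z ∈ flowerRel E) (D : RecLin V) (hD : RecLinOf D E) :
    z ∈ projRelax D E := by
  refine ⟨extW E z, ⟨?_, ?_, ?_⟩, ?_⟩
  · exact fun I _ => ⟨extW_nonneg hz I, extW_le_one hz I⟩
  · exact fun a ha => arc_mono hz (D.arcs_subset a ha)
      (D.nodes_nonempty _ (D.arcs_snd_mem a ha))
  · intro I hI hns
    refine node_flower hz hns (succOf D.arcs I) ?_ ?_ (D.succ_union I hI hns)
    · intro J hJ
      obtain ⟨a, ha, h1, h2⟩ := mem_succOf.mp hJ
      rw [← h1, ← h2]; exact D.arcs_subset a ha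
    · intro J hJ
      obtain ⟨a, ha, _, h2⟩ := mem_succOf.mp hJ
      rw [← h2]; exact D.nodes_nonempty _ (D.arcs_snd_mem a ha)
  · intro I hI; unfold extW; rw [if_pos hI]

end FlowerPf

namespace FlowerPf

variable {V : Type} [Fintype V] [DecidableEq V]

lemma isSingleton_iff_card {I : Finset V} : IsSingleton I ↔ I.card = 1 := by
  constructor
  · rintro ⟨v, rfl⟩; simp
  · intro h; exact Finset.card_eq_one.mp h

lemma two_le_of_not_singleton {I : Finset V} (hne : I.Nonempty) (h : ¬ IsSingleton I) :
    2 ≤ I.card := by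
  have h1 : I.card ≠ 1 := fun hc => h (isSingleton_iff_card.mpr hc)
  have h2 : 0 < I.card := Finset.card_pos.mpr hne
  omega

/-! ### The generic McCormick construction from a splitting rule -/

def GoodSplit (split : Finset V → Finset V) : Prop :=
  ∀ M : Finset V, 2 ≤ M.card → (split M).Nonempty ∧ split M ⊂ M

lemma sdiff_split_nonempty {split : Finset V → Finset V} (hs : GoodSplit split)
    {M : Finset V} (h2 : 2 ≤ M.card) : (M \ split M).Nonempty :=
  Finset.sdiff_nonempty.mpr (fun hsub => (hs M h2).2.not_subset hsub)

lemma card_sdiff_split_lt {split : Finset V → Finset V} (hs : GoodSplit split)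
    {M : Finset V} (h2 : 2 ≤ M.card) : (M \ split M).card < M.card :=
  Finset.card_lt_card (Finset.sdiff_ssubset (hs M h2).2.subset (hs M h2).1)

def desc (split : Finset V → Finset V) (hs : GoodSplit split) (M : Finset V) :
    Finset (Finset V) :=
  if h : 2 ≤ M.card then
    {M} ∪ desc split hs (split M) ∪ desc split hs (M \ split M)
  else {M}
termination_by M.card
decreasing_by
  · exact Finset.card_lt_card (hs M h).2
  · exact Finset.card_lt_card (Finset.sdiff_ssubset (hs M h).2.subset (hs M h).1)

lemma desc_eq (split : Finset V → Finset V) (hs : GoodSplit split) (M : Finset V) :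
    desc split hs M =
      if 2 ≤ M.card then
        {M} ∪ desc split hs (split M) ∪ desc split hs (M \ split M)
      else {M} := by
  rw [desc]
  split_ifs <;> rfl

lemma self_mem_desc (split : Finset V → Finset V) (hs : GoodSplit split) (M : Finset V) :
    M ∈ desc split hs M := by
  rw [desc_eq]
  split_ifs <;> simp

lemma children_mem_desc (split : Finset V → Finset V) (hs : GoodSplit split)
    {M : Finset V} (h2 : 2 ≤ M.card) :
    split M ∈ desc split hs M ∧ M \ split M ∈ desc split hs M := by
  rw [desc_eq, if_pos h2]
  constructor
  · exact Finset.mem_union_left _ (Finset.mem_union_right _ (self_mem_desc split hs _))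
  · exact Finset.mem_union_right _ (self_mem_desc split hs _)

lemma desc_strong (split : Finset V → Finset V) (hs : GoodSplit split) :
    ∀ n : ℕ, ∀ M : Finset V, M.card ≤ n → ∀ A ∈ desc split hs M,
      (A ⊆ M ∧ (M.Nonempty → A.Nonempty)) ∧ desc split hs A ⊆ desc split hs M ∧
      (A ≠ M → ∃ P ∈ desc split hs M, 2 ≤ P.card ∧ (A = split P ∨ A = P \ split P)) := by
  intro n
  induction n with
  | zero =>
    intro M hM A hA
    rw [desc_eq] at hA
    have h2 : ¬ 2 ≤ M.card := by omega
    rw [if_neg h2] at hA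
    rw [Finset.mem_singleton.mp hA]
    exact ⟨⟨Finset.Subset.refl M, fun h => h⟩, Finset.Subset.refl _, fun h => absurd rfl h⟩
  | succ n ih =>
    intro M hM A hA
    rw [desc_eq] at hA
    by_cases h2 : 2 ≤ M.card
    · rw [if_pos h2] at hA
      have hcardL : (split M).card ≤ n := by
        have := Finset.card_lt_card (hs M h2).2; omega
      have hcardR : (M \ split M).card ≤ n := by
        have := card_sdiff_split_lt hs h2; omega
      rcases Finset.mem_union.mp hA with hA' | hAR
      · rcases Finset.mem_union.mp hA' with hAM | hAL
        · rw [Finset.mem_singleton.mp hAM]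
          exact ⟨⟨Finset.Subset.refl M, fun h => h⟩, Finset.Subset.refl _,
            fun h => absurd rfl h⟩
        · obtain ⟨⟨hsub, hne⟩, htrans, _⟩ := ih (split M) hcardL A hAL
          refine ⟨⟨hsub.trans (hs M h2).2.subset,
            fun _ => hne (hs M h2).1⟩, ?_, ?_⟩
          · refine htrans.trans ?_
            intro x hx
            rw [desc_eq split hs M, if_pos h2]
            exact Finset.mem_union_left _ (Finset.mem_union_right _ hx)
          · intro _
            by_cases hAeq : A = split M
            · exact ⟨M, self_mem_desc split hs M, h2, Or.inl hAeq⟩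
            · obtain ⟨_, _, hpar⟩ := ih (split M) hcardL A hAL
              obtain ⟨P, hP, hP2, hPc⟩ := hpar hAeq
              refine ⟨P, ?_, hP2, hPc⟩
              rw [desc_eq split hs M, if_pos h2]
              exact Finset.mem_union_left _ (Finset.mem_union_right _ hP)
      · obtain ⟨⟨hsub, hne⟩, htrans, _⟩ := ih (M \ split M) hcardR A hAR
        refine ⟨⟨hsub.trans (Finset.sdiff_subset),
          fun _ => hne (sdiff_split_nonempty hs h2)⟩, ?_, ?_⟩
        · refine htrans.trans ?_
          intro x hx
          rw [desc_eq split hs M, if_pos h2]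
          exact Finset.mem_union_right _ hx
        · intro _
          by_cases hAeq : A = M \ split M
          · exact ⟨M, self_mem_desc split hs M, h2, Or.inr hAeq⟩
          · obtain ⟨_, _, hpar⟩ := ih (M \ split M) hcardR A hAR
            obtain ⟨P, hP, hP2, hPc⟩ := hpar hAeq
            refine ⟨P, ?_, hP2, hPc⟩
            rw [desc_eq split hs M, if_pos h2]
            exact Finset.mem_union_right _ hP
    · rw [if_neg h2] at hA
      rw [Finset.mem_singleton.mp hA]
      exact ⟨⟨Finset.Subset.refl M, fun h => h⟩, Finset.Subset.refl _,
        fun h => absurd rfl h⟩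

lemma desc_subset (split : Finset V → Finset V) (hs : GoodSplit split)
    {M A : Finset V} (hA : A ∈ desc split hs M) : A ⊆ M :=
  ((desc_strong split hs M.card M le_rfl A hA).1).1

lemma desc_nonempty (split : Finset V → Finset V) (hs : GoodSplit split)
    {M A : Finset V} (hA : A ∈ desc split hs M) (hM : M.Nonempty) : A.Nonempty :=
  ((desc_strong split hs M.card M le_rfl A hA).1).2 hM

lemma desc_trans (split : Finset V → Finset V) (hs : GoodSplit split)
    {M A : Finset V} (hA : A ∈ desc split hs M) : desc split hs A ⊆ desc split hs M :=
  (desc_strong split hs M.card M le_rfl A hA).2.1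

lemma desc_parent (split : Finset V → Finset V) (hs : GoodSplit split)
    {M A : Finset V} (hA : A ∈ desc split hs M) (hne : A ≠ M) :
    ∃ P ∈ desc split hs M, 2 ≤ P.card ∧ (A = split P ∨ A = P \ split P) :=
  (desc_strong split hs M.card M le_rfl A hA).2.2 hne

variable (E : Finset (Finset V))

def mkNodes (split : Finset V → Finset V) (hs : GoodSplit split) : Finset (Finset V) :=
  E.biUnion (desc split hs) ∪ singles V

def mkArcs (split : Finset V → Finset V) (hs : GoodSplit split) :
    Finset (Finset V × Finset V) :=
  ((mkNodes E split hs).filter (fun M => ¬ IsSingleton M)).biUnion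
    (fun M => {(M, split M), (M, M \ split M)})

variable {E} (hE : ∀ I ∈ E, 2 ≤ I.card) (split : Finset V → Finset V)
  (hs : GoodSplit split)

include hE in
lemma mkNodes_nonempty : ∀ M ∈ mkNodes E split hs, M.Nonempty := by
  intro M hM
  rcases Finset.mem_union.mp hM with h | h
  · obtain ⟨I, hI, hMI⟩ := Finset.mem_biUnion.mp h
    exact desc_nonempty split hs hMI (Finset.card_pos.mp (by have := hE I hI; omega))
  · obtain ⟨v, rfl⟩ := mem_singles.mp h
    exact Finset.singleton_nonempty v

include hE in
lemma mkNodes_two_le {M : Finset V} (hM : M ∈ mkNodes E split hs)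
    (hns : ¬ IsSingleton M) : 2 ≤ M.card :=
  two_le_of_not_singleton (mkNodes_nonempty hE split hs M hM) hns

lemma child_mem_mkNodes {M : Finset V} (hM : M ∈ mkNodes E split hs)
    (h2 : 2 ≤ M.card) :
    split M ∈ mkNodes E split hs ∧ M \ split M ∈ mkNodes E split hs := by
  rcases Finset.mem_union.mp hM with h | h
  · obtain ⟨I, hI, hMI⟩ := Finset.mem_biUnion.mp h
    have hL := desc_trans split hs hMI ((children_mem_desc split hs h2).1)
    have hR := desc_trans split hs hMI ((children_mem_desc split hs h2).2)
    exact ⟨Finset.mem_union_left _ (Finset.mem_biUnion.mpr ⟨I, hI, hL⟩),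
      Finset.mem_union_left _ (Finset.mem_biUnion.mpr ⟨I, hI, hR⟩)⟩
  · obtain ⟨v, rfl⟩ := mem_singles.mp h
    simp at h2

lemma mem_mkArcs {a : Finset V × Finset V} :
    a ∈ mkArcs E split hs ↔ ∃ M ∈ mkNodes E split hs, ¬ IsSingleton M ∧
      (a = (M, split M) ∨ a = (M, M \ split M)) := by
  simp only [mkArcs, Finset.mem_biUnion, Finset.mem_filter, Finset.mem_insert,
    Finset.mem_singleton]
  constructor
  · rintro ⟨M, ⟨hM, hns⟩, h⟩; exact ⟨M, hM, hns, h⟩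
  · rintro ⟨M, hM, hns, h⟩; exact ⟨M, ⟨hM, hns⟩, h⟩

include hE in
lemma succOf_mkArcs {M : Finset V} (hM : M ∈ mkNodes E split hs)
    (hns : ¬ IsSingleton M) :
    succOf (mkArcs E split hs) M = {split M, M \ split M} := by
  ext J
  simp only [mem_succOf, Finset.mem_insert, Finset.mem_singleton]
  constructor
  · rintro ⟨a, ha, h1, h2⟩
    obtain ⟨M', _, _, hc⟩ := (mem_mkArcs split hs).mp ha
    rcases hc with rfl | rfl
    · simp only at h1 h2
      subst h1; exact Or.inl h2.symm
    · simp only at h1 h2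
      subst h1; exact Or.inr h2.symm
  · rintro (rfl | rfl)
    · exact ⟨(M, split M), (mem_mkArcs split hs).mpr ⟨M, hM, hns, Or.inl rfl⟩, rfl, rfl⟩
    · exact ⟨(M, M \ split M), (mem_mkArcs split hs).mpr ⟨M, hM, hns, Or.inr rfl⟩,
        rfl, rfl⟩

include hE in
lemma succOf_mkArcs_empty {M : Finset V} (hns : IsSingleton M) :
    succOf (mkArcs E split hs) M = ∅ := by
  rw [Finset.eq_empty_iff_forall_notMem]
  intro J hJ
  obtain ⟨a, ha, h1, _⟩ := mem_succOf.mp hJ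
  obtain ⟨M', _, hns', hc⟩ := (mem_mkArcs split hs).mp ha
  rcases hc with rfl | rfl <;> simp only at h1 <;> exact hns' (h1 ▸ hns)

def mkD : RecLin V where
  nodes := mkNodes E split hs
  arcs := mkArcs E split hs
  arcs_fst_mem := by
    intro a ha
    obtain ⟨M, hM, _, hc⟩ := (mem_mkArcs split hs).mp ha
    rcases hc with rfl | rfl <;> exact hM
  arcs_snd_mem := by
    intro a ha
    obtain ⟨M, hM, hns, hc⟩ := (mem_mkArcs split hs).mp ha
    have h2 := mkNodes_two_le hE split hs hM hns
    rcases hc with rfl | rfl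
    · exact (child_mem_mkNodes split hs hM h2).1
    · exact (child_mem_mkNodes split hs hM h2).2
  no_loops := by
    intro a ha
    obtain ⟨M, hM, hns, hc⟩ := (mem_mkArcs split hs).mp ha
    have h2 := mkNodes_two_le hE split hs hM hns
    rcases hc with rfl | rfl
    · exact fun h => (hs M h2).2.ne (h.symm)
    · intro h
      have hMe : M = M \ split M := h
      have := card_sdiff_split_lt hs h2
      rw [← hMe] at this
      omega
  singleton_mem := fun v =>
    Finset.mem_union_right _ (mem_singles.mpr ⟨v, rfl⟩)
  nodes_nonempty := mkNodes_nonempty hE split hs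
  arcs_subset := by
    intro a ha
    obtain ⟨M, hM, hns, hc⟩ := (mem_mkArcs split hs).mp ha
    have h2 := mkNodes_two_le hE split hs hM hns
    rcases hc with rfl | rfl
    · exact (hs M h2).2.subset
    · exact Finset.sdiff_subset
  succ_union := by
    intro M hM hns
    rw [succOf_mkArcs hE split hs hM hns]
    have h2 := mkNodes_two_le hE split hs hM hns
    rw [Finset.biUnion_insert, Finset.singleton_biUnion]
    exact Finset.union_sdiff_of_subset (hs M h2).2.subset

lemma mkD_recLinOf : RecLinOf (mkD hE split hs) E := by
  constructor
  · intro I hI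
    exact Finset.mem_union_left _
      (Finset.mem_biUnion.mpr ⟨I, hI, self_mem_desc split hs I⟩)
  · intro M hM hnoarc
    by_contra hcon
    push_neg at hcon
    obtain ⟨hME, hns⟩ := hcon
    rcases Finset.mem_union.mp hM with h | h
    · obtain ⟨I, hI, hMI⟩ := Finset.mem_biUnion.mp h
      have hMneI : M ≠ I := fun h => hME (h ▸ hI)
      obtain ⟨P, hP, hP2, hPc⟩ := desc_parent split hs hMI hMneI
      have hPmem : P ∈ mkNodes E split hs :=
        Finset.mem_union_left _ (Finset.mem_biUnion.mpr ⟨I, hI, hP⟩)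
      have hPns : ¬ IsSingleton P := fun hsg => by
        rw [isSingleton_iff_card] at hsg; omega
      rcases hPc with rfl | rfl
      · exact hnoarc (P, split P)
          ((mem_mkArcs split hs).mpr ⟨P, hPmem, hPns, Or.inl rfl⟩) rfl
      · exact hnoarc (P, P \ split P)
          ((mem_mkArcs split hs).mpr ⟨P, hPmem, hPns, Or.inr rfl⟩) rfl
    · exact hns (mem_singles.mp h)

include hs in
lemma split_ne_sdiff {M : Finset V} (h2 : 2 ≤ M.card) : split M ≠ M \ split M := by
  intro h
  obtain ⟨x, hx⟩ := (hs M h2).1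
  have hx2 : x ∈ M \ split M := h ▸ hx
  exact (Finset.mem_sdiff.mp hx2).2 hx

lemma mkD_mccormick : McCormick (mkD hE split hs) := by
  have harcs : (mkD hE split hs).arcs = mkArcs E split hs := rfl
  have hnodes : (mkD hE split hs).nodes = mkNodes E split hs := rfl
  constructor
  · intro I hI J hJ J' hJ' hne
    rw [harcs] at hJ hJ'
    rw [hnodes] at hI
    by_cases hns : IsSingleton I
    · rw [succOf_mkArcs_empty hE split hs hns] at hJ
      exact absurd hJ (Finset.notMem_empty J)
    · rw [succOf_mkArcs hE split hs hI hns] at hJ hJ'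
      rcases Finset.mem_insert.mp hJ with rfl | hJ <;>
        rcases Finset.mem_insert.mp hJ' with rfl | hJ'
      · exact absurd rfl hne
      · rw [Finset.mem_singleton.mp hJ']
        exact Finset.inter_sdiff_self _ _
      · rw [Finset.mem_singleton.mp hJ]
        exact Finset.sdiff_inter_self _ _
      · rw [Finset.mem_singleton.mp hJ, Finset.mem_singleton.mp hJ'] at hne
        exact absurd rfl hne
  · intro I hI hns
    rw [harcs]
    rw [hnodes] at hI
    rw [succOf_mkArcs hE split hs hI hns]
    exact Finset.card_pair (split_ne_sdiff split hs (mkNodes_two_le hE split hs hI hns))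

/-! ### Specific splitting rules -/

noncomputable def minSplit : Finset V → Finset V := fun M =>
  if h : M.Nonempty then {h.choose} else ∅

lemma minSplit_good : GoodSplit (minSplit (V := V)) := by
  intro M h2
  have hne : M.Nonempty := Finset.card_pos.mp (by omega)
  have hMem : hne.choose ∈ M := hne.choose_spec
  have heq : minSplit M = {hne.choose} := dif_pos hne
  rw [heq]
  refine ⟨Finset.singleton_nonempty _, ?_⟩
  refine Finset.ssubset_iff_subset_ne.mpr ⟨Finset.singleton_subset_iff.mpr hMem, ?_⟩
  intro h
  rw [← h] at h2
  simp at h2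

noncomputable def vSplit (v : V) : Finset V → Finset V := fun M =>
  if v ∈ M then {v} else minSplit M

lemma vSplit_good (v : V) : GoodSplit (vSplit v) := by
  intro M h2
  by_cases hv : v ∈ M
  · have heq : vSplit v M = {v} := if_pos hv
    rw [heq]
    refine ⟨Finset.singleton_nonempty _, ?_⟩
    refine Finset.ssubset_iff_subset_ne.mpr ⟨Finset.singleton_subset_iff.mpr hv, ?_⟩
    intro h
    rw [← h] at h2
    simp at h2
  · have heq : vSplit v M = minSplit M := if_neg hv
    rw [heq]
    exact minSplit_good M h2

noncomputable def kSplit {k : ℕ} (K : Fin k → Finset V) (M : Finset V) : Finset V :=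
  if h : ∃ t, (K t ∩ M).Nonempty ∧ K t ∩ M ⊂ M then K h.choose ∩ M else minSplit M

lemma kSplit_pos {k : ℕ} (K : Fin k → Finset V) {M : Finset V}
    (h : ∃ t, (K t ∩ M).Nonempty ∧ K t ∩ M ⊂ M) :
    kSplit K M = K h.choose ∩ M := dif_pos h

lemma kSplit_good {k : ℕ} (K : Fin k → Finset V) : GoodSplit (kSplit K) := by
  intro M h2
  by_cases h : ∃ t, (K t ∩ M).Nonempty ∧ K t ∩ M ⊂ M
  · rw [kSplit_pos K h]
    exact ⟨h.choose_spec.1, h.choose_spec.2⟩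
  · have heq : kSplit K M = minSplit M := dif_neg h
    rw [heq]
    exact minSplit_good M h2

/-! ### The McCormick intersection is contained in the flower relaxation -/

omit hs in
include hE in
lemma bounds_of_inter {z : Finset V → ℝ}
    (hz : ∀ D : RecLin V, RecLinOf D E ∧ McCormick D → z ∈ projRelax D E) :
    ∀ I : Finset V, (I ∈ E ∨ IsSingleton I) → 0 ≤ z I ∧ z I ≤ 1 := by
  intro I hI
  obtain ⟨w, hw, hagree⟩ := hz (mkD hE minSplit minSplit_good)
    ⟨mkD_recLinOf hE minSplit minSplit_good, mkD_mccormick hE minSplit minSplit_good⟩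
  have hIn : I ∈ (mkD hE minSplit minSplit_good).nodes := by
    rcases hI with hIE | ⟨v, rfl⟩
    · exact (mkD_recLinOf hE minSplit minSplit_good).1 hIE
    · exact (mkD hE minSplit minSplit_good).singleton_mem v
  rw [← hagree I hI]
  exact hw.1 I hIn

omit hs in
include hE in
lemma mono_of_inter {z : Finset V → ℝ}
    (hz : ∀ D : RecLin V, RecLinOf D E ∧ McCormick D → z ∈ projRelax D E) :
    ∀ I ∈ E, ∀ v ∈ I, z I ≤ z {v} := by
  intro I hIE v hvI
  obtain ⟨w, hw, hagree⟩ := hz (mkD hE (vSplit v) (vSplit_good v))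
    ⟨mkD_recLinOf hE (vSplit v) (vSplit_good v), mkD_mccormick hE (vSplit v) (vSplit_good v)⟩
  have hIn : I ∈ mkNodes E (vSplit v) (vSplit_good v) :=
    (mkD_recLinOf hE (vSplit v) (vSplit_good v)).1 hIE
  have hns : ¬ IsSingleton I := fun hsg => by
    rw [isSingleton_iff_card] at hsg
    have := hE I hIE; omega
  have hvs : vSplit v I = {v} := if_pos hvI
  have harc : (I, ({v} : Finset V)) ∈ mkArcs E (vSplit v) (vSplit_good v) :=
    (mem_mkArcs (vSplit v) (vSplit_good v)).mpr ⟨I, hIn, hns, Or.inl (by rw [hvs])⟩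
  have hle : w I ≤ w {v} := hw.2.1 (I, ({v} : Finset V)) harc
  rw [← hagree I (Or.inl hIE), ← hagree {v} (Or.inr ⟨v, rfl⟩)]
  exact hle

omit hs in
include hE in
lemma flower_of_inter {z : Finset V → ℝ}
    (hz : ∀ D : RecLin V, RecLinOf D E ∧ McCormick D → z ∈ projRelax D E) :
    ∀ I ∈ E, ∀ k : ℕ, ∀ J : Fin k → Finset V,
      (∀ i, J i ∈ E ∨ IsSingleton (J i)) →
      I ⊆ Finset.univ.biUnion J →
      (∀ i, (J i ∩ I).Nonempty) →
      z I + ∑ i, (1 - z (J i)) ≥ 1 := by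
  classical
  intro I hIE k J hJmem hcov _hint
  -- the greedy partition of I subordinate to the family J
  set K : Fin k → Finset V :=
    fun i => (J i ∩ I) \ (Finset.univ.filter (· < i)).biUnion (fun j => J j ∩ I)
      with hK
  have hKsub : ∀ i, K i ⊆ J i ∩ I := fun i => Finset.sdiff_subset
  have hKdisj' : ∀ i j : Fin k, i < j → K i ∩ K j = ∅ := by
    intro i j hij
    rw [Finset.eq_empty_iff_forall_notMem]
    intro x hx
    obtain ⟨hxi, hxj⟩ := Finset.mem_inter.mp hx
    have hx1 : x ∈ J i ∩ I := hKsub i hxi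
    have hx2 := (Finset.mem_sdiff.mp hxj).2
    exact hx2 (Finset.mem_biUnion.mpr ⟨i, Finset.mem_filter.mpr ⟨Finset.mem_univ i, hij⟩, hx1⟩)
  have hKdisj : ∀ i j : Fin k, i ≠ j → K i ∩ K j = ∅ := by
    intro i j hij
    rcases lt_or_gt_of_ne hij with h | h
    · exact hKdisj' i j h
    · rw [Finset.inter_comm]; exact hKdisj' j i h
  have hcover : ∀ x ∈ I, ∃ i, x ∈ K i := by
    intro x hxI
    have hxb := hcov hxI
    obtain ⟨i₁, _, hxi₁⟩ := Finset.mem_biUnion.mp hxb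
    set S : Finset (Fin k) := Finset.univ.filter (fun i => x ∈ J i) with hS
    have hSne : S.Nonempty := ⟨i₁, Finset.mem_filter.mpr ⟨Finset.mem_univ _, hxi₁⟩⟩
    set i₀ := S.min' hSne with hi₀
    refine ⟨i₀, Finset.mem_sdiff.mpr ⟨?_, ?_⟩⟩
    · exact Finset.mem_inter.mpr
        ⟨(Finset.mem_filter.mp (S.min'_mem hSne)).2, hxI⟩
    · intro hcon
      obtain ⟨l, hl, hxl⟩ := Finset.mem_biUnion.mp hcon
      have hlS : l ∈ S := Finset.mem_filter.mpr
        ⟨Finset.mem_univ _, (Finset.mem_inter.mp hxl).1⟩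
      have := S.min'_le l hlS
      have hlt := (Finset.mem_filter.mp hl).2
      exact absurd this (not_le.mpr hlt)
  set T : Finset (Fin k) := Finset.univ.filter (fun i => (K i).Nonempty) with hT
  have hIT : I = T.biUnion K := by
    ext x
    constructor
    · intro hxI
      obtain ⟨i, hxi⟩ := hcover x hxI
      exact Finset.mem_biUnion.mpr
        ⟨i, Finset.mem_filter.mpr ⟨Finset.mem_univ _, ⟨x, hxi⟩⟩, hxi⟩
    · intro hx
      obtain ⟨i, _, hxi⟩ := Finset.mem_biUnion.mp hx
      exact (Finset.mem_inter.mp (hKsub i hxi)).2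
  -- the McCormick linearization adapted to the partition K
  obtain ⟨w, hw, hagree⟩ := hz (mkD hE (kSplit K) (kSplit_good K))
    ⟨mkD_recLinOf hE (kSplit K) (kSplit_good K),
      mkD_mccormick hE (kSplit K) (kSplit_good K)⟩
  have hnsOf : ∀ {M : Finset V}, 2 ≤ M.card → ¬ IsSingleton M := by
    intro M h2 hsg; rw [isSingleton_iff_card] at hsg; omega
  have harcL : ∀ M, M ∈ mkNodes E (kSplit K) (kSplit_good K) → 2 ≤ M.card →
      w M ≤ w (kSplit K M) := fun M hM h2 =>
    hw.2.1 (M, kSplit K M)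
      ((mem_mkArcs (kSplit K) (kSplit_good K)).mpr ⟨M, hM, hnsOf h2, Or.inl rfl⟩)
  have harcR : ∀ M, M ∈ mkNodes E (kSplit K) (kSplit_good K) → 2 ≤ M.card →
      w M ≤ w (M \ kSplit K M) := fun M hM h2 =>
    hw.2.1 (M, M \ kSplit K M)
      ((mem_mkArcs (kSplit K) (kSplit_good K)).mpr ⟨M, hM, hnsOf h2, Or.inr rfl⟩)
  have hflowM : ∀ M, M ∈ mkNodes E (kSplit K) (kSplit_good K) → 2 ≤ M.card →
      1 ≤ w M + (1 - w (kSplit K M)) + (1 - w (M \ kSplit K M)) := by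
    intro M hM h2
    have hns := hnsOf h2
    have hfl := hw.2.2 M hM hns
    rw [show (mkD hE (kSplit K) (kSplit_good K)).arcs
        = mkArcs E (kSplit K) (kSplit_good K) from rfl] at hfl
    rw [succOf_mkArcs hE (kSplit K) (kSplit_good K) hM hns,
      Finset.sum_pair (split_ne_sdiff (kSplit K) (kSplit_good K) h2)] at hfl
    linarith
  -- descending from a superset node to a part
  have descend : ∀ n : ℕ, ∀ t : Fin k, (K t).Nonempty → ∀ M : Finset V,
      M.card ≤ n → M ∈ mkNodes E (kSplit K) (kSplit_good K) → K t ⊆ M →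
      w M ≤ w (K t) := by
    intro n
    induction n with
    | zero =>
      intro t ht M hM _ hsub
      obtain ⟨x, hx⟩ := ht
      have hxM : x ∈ M := hsub hx
      have : 0 < M.card := Finset.card_pos.mpr ⟨x, hxM⟩
      omega
    | succ n ih =>
      intro t ht M hM hnode hsub
      by_cases hMK : M = K t
      · rw [hMK]
      · have hssub : K t ⊂ M :=
          Finset.ssubset_iff_subset_ne.mpr ⟨hsub, fun h => hMK h.symm⟩
        have h2 : 2 ≤ M.card := by
          have h1 := Finset.card_lt_card hssub
          have := Finset.card_pos.mpr ht
          omega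
        have hex : ∃ s, (K s ∩ M).Nonempty ∧ K s ∩ M ⊂ M :=
          ⟨t, by rw [Finset.inter_eq_left.mpr hsub]; exact ⟨ht, hssub⟩⟩
        have hkc : kSplit K M = K hex.choose ∩ M := kSplit_pos K hex
        by_cases hst : hex.choose = t
        · have hkt : kSplit K M = K t := by
            rw [hkc, hst, Finset.inter_eq_left.mpr hsub]
          calc w M ≤ w (kSplit K M) := harcL M hnode h2
            _ = w (K t) := by rw [hkt]
        · have hdis := hKdisj hex.choose t hst
          have hsub' : K t ⊆ M \ kSplit K M := by
            intro x hx
            refine Finset.mem_sdiff.mpr ⟨hsub hx, ?_⟩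
            rw [hkc]
            intro hcon
            have hmem : x ∈ K hex.choose ∩ K t :=
              Finset.mem_inter.mpr ⟨(Finset.mem_inter.mp hcon).1, hx⟩
            rw [hdis] at hmem
            exact absurd hmem (Finset.notMem_empty x)
          have hcard : (M \ kSplit K M).card ≤ n := by
            have := card_sdiff_split_lt (kSplit_good K) h2
            omega
          have hnode' := (child_mem_mkNodes (kSplit K) (kSplit_good K) hnode h2).2
          calc w M ≤ w (M \ kSplit K M) := harcR M hnode h2
            _ ≤ w (K t) := ih t ht _ hcard hnode' hsub'
  -- the spine inequality
  have spine : ∀ n : ℕ, ∀ M : Finset V, ∀ T' : Finset (Fin k), M.card ≤ n →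
      M ∈ mkNodes E (kSplit K) (kSplit_good K) → T'.Nonempty →
      (∀ s ∈ T', (K s).Nonempty) → M = T'.biUnion K →
      1 - ∑ s ∈ T', (1 - w (K s)) ≤ w M := by
    intro n
    induction n with
    | zero =>
      intro M T' hM _ hT' hKne hMU
      obtain ⟨s, hsT⟩ := hT'
      obtain ⟨x, hx⟩ := hKne s hsT
      have hxM : x ∈ M := by rw [hMU]; exact Finset.mem_biUnion.mpr ⟨s, hsT, hx⟩
      have : 0 < M.card := Finset.card_pos.mpr ⟨x, hxM⟩
      omega
    | succ n ih =>
      intro M T' hM hnode hT' hKne hMU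
      have hKsubM : ∀ s ∈ T', K s ⊆ M := by
        intro s hsT x hx
        rw [hMU]; exact Finset.mem_biUnion.mpr ⟨s, hsT, hx⟩
      by_cases hone : T'.card = 1
      · obtain ⟨s, rfl⟩ := Finset.card_eq_one.mp hone
        rw [Finset.singleton_biUnion] at hMU
        rw [Finset.sum_singleton, hMU]
        linarith
      · have h2T : 2 ≤ T'.card := by
          have := Finset.card_pos.mpr hT'; omega
        obtain ⟨s₁, hs₁, s₂, hs₂, hs12⟩ := Finset.one_lt_card.mp (show 1 < T'.card by omega)
        obtain ⟨x₂, hx₂⟩ := hKne s₂ hs₂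
        have hx2M : x₂ ∈ M := hKsubM s₂ hs₂ hx₂
        have hx2ns₁ : x₂ ∉ K s₁ := by
          intro hcon
          have hmem : x₂ ∈ K s₁ ∩ K s₂ := Finset.mem_inter.mpr ⟨hcon, hx₂⟩
          rw [hKdisj s₁ s₂ hs12] at hmem
          exact absurd hmem (Finset.notMem_empty x₂)
        have hex : ∃ s, (K s ∩ M).Nonempty ∧ K s ∩ M ⊂ M := by
          refine ⟨s₁, ?_⟩
          rw [Finset.inter_eq_left.mpr (hKsubM s₁ hs₁)]
          refine ⟨hKne s₁ hs₁, Finset.ssubset_iff_subset_ne.mpr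
            ⟨hKsubM s₁ hs₁, fun h => hx2ns₁ (h ▸ hx2M)⟩⟩
        have hspec := hex.choose_spec
        have ht₀T : hex.choose ∈ T' := by
          obtain ⟨x, hx⟩ := hspec.1
          have hxM := (Finset.mem_inter.mp hx).2
          have hxK := (Finset.mem_inter.mp hx).1
          rw [hMU] at hxM
          obtain ⟨s, hsT, hxs⟩ := Finset.mem_biUnion.mp hxM
          by_cases h : hex.choose = s
          · rw [h]; exact hsT
          · have hmem : x ∈ K hex.choose ∩ K s := Finset.mem_inter.mpr ⟨hxK, hxs⟩
            rw [hKdisj hex.choose s h] at hmem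
            exact absurd hmem (Finset.notMem_empty x)
        have hKt₀M : K hex.choose ⊆ M := hKsubM hex.choose ht₀T
        have hsplitM : kSplit K M = K hex.choose := by
          rw [kSplit_pos K hex, Finset.inter_eq_left.mpr hKt₀M]
        have h2 : 2 ≤ M.card := by
          obtain ⟨x₁, hx₁⟩ := hspec.1
          have hx1M := (Finset.mem_inter.mp hx₁).2
          have hx1K := (Finset.mem_inter.mp hx₁).1
          obtain ⟨y, hyM, hynK⟩ := Finset.exists_of_ssubset hspec.2
          have hxy : x₁ ≠ y := fun h => hynK (h ▸ hx₁)
          exact Finset.one_lt_card.mpr ⟨x₁, hx1M, y, hyM, hxy⟩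
        have hR : M \ kSplit K M = (T'.erase hex.choose).biUnion K := by
          rw [hsplitM]
          ext x
          simp only [Finset.mem_sdiff, Finset.mem_biUnion, Finset.mem_erase]
          constructor
          · rintro ⟨hxM, hxK⟩
            rw [hMU] at hxM
            obtain ⟨s, hsT, hxs⟩ := Finset.mem_biUnion.mp hxM
            exact ⟨s, ⟨fun h => hxK (h ▸ hxs), hsT⟩, hxs⟩
          · rintro ⟨s, ⟨hsne, hsT⟩, hxs⟩
            refine ⟨hKsubM s hsT hxs, fun hxK => ?_⟩
            have hmem : x ∈ K hex.choose ∩ K s := Finset.mem_inter.mpr ⟨hxK, hxs⟩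
            rw [hKdisj hex.choose s (fun h => hsne h.symm)] at hmem
            exact absurd hmem (Finset.notMem_empty x)
        have hRnode := (child_mem_mkNodes (kSplit K) (kSplit_good K) hnode h2).2
        have hRcard : (M \ kSplit K M).card ≤ n := by
          have := card_sdiff_split_lt (kSplit_good K) h2
          omega
        have hT'e : (T'.erase hex.choose).Nonempty := by
          rw [← Finset.card_pos, Finset.card_erase_of_mem ht₀T]
          omega
        have hIH := ih (M \ kSplit K M) (T'.erase hex.choose) hRcard hRnode hT'e
          (fun s hsT => hKne s (Finset.mem_of_mem_erase hsT)) hR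
        have hfl := hflowM M hnode h2
        have hsum : ∑ s ∈ T', (1 - w (K s))
            = (1 - w (K hex.choose)) + ∑ s ∈ T'.erase hex.choose, (1 - w (K s)) :=
          (Finset.add_sum_erase T' _ ht₀T).symm
        rw [hsum, ← hsplitM]
        linarith
  -- put everything together
  have hInode : I ∈ mkNodes E (kSplit K) (kSplit_good K) :=
    (mkD_recLinOf hE (kSplit K) (kSplit_good K)).1 hIE
  have hJnode : ∀ i, J i ∈ mkNodes E (kSplit K) (kSplit_good K) := by
    intro i
    rcases hJmem i with h | ⟨v, hv⟩
    · exact (mkD_recLinOf hE (kSplit K) (kSplit_good K)).1 h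
    · rw [hv]; exact Finset.mem_union_right _ (mem_singles.mpr ⟨v, rfl⟩)
  have hTne : T.Nonempty := by
    have hIne : I.Nonempty := Finset.card_pos.mp (by have := hE I hIE; omega)
    obtain ⟨x, hxI⟩ := hIne
    obtain ⟨i, hxi⟩ := hcover x hxI
    exact ⟨i, Finset.mem_filter.mpr ⟨Finset.mem_univ _, ⟨x, hxi⟩⟩⟩
  have h1 := spine I.card I T le_rfl hInode hTne
    (fun s hsT => (Finset.mem_filter.mp hsT).2) hIT
  have h2 : ∀ t ∈ T, w (J t) ≤ w (K t) := by
    intro t htT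
    exact descend (J t).card t ((Finset.mem_filter.mp htT).2) (J t) le_rfl (hJnode t)
      ((hKsub t).trans Finset.inter_subset_left)
  have h3 : ∀ i, w (J i) = z (J i) := fun i => hagree (J i) (hJmem i)
  have hwI : w I = z I := hagree I (Or.inl hIE)
  have h4 : ∀ i, z (J i) ≤ 1 := fun i => by
    have := (hw.1 (J i) (hJnode i)).2
    rw [h3 i] at this
    exact this
  have h5 : ∑ t ∈ T, (1 - w (K t)) ≤ ∑ t ∈ T, (1 - z (J t)) :=
    Finset.sum_le_sum fun t ht => by
      have h2' := h2 t ht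
      rw [h3 t] at h2'
      linarith
  have h6 : ∑ t ∈ T, (1 - z (J t)) ≤ ∑ i, (1 - z (J i)) :=
    Finset.sum_le_sum_of_subset_of_nonneg (Finset.subset_univ T)
      (fun i _ _ => by have := h4 i; linarith)
  linarith

end FlowerPf

/-- the extended flower relaxation, the intersection of the projected
relaxations of all recursive linearizations of `G`, and the intersection of the
projected relaxations of all recursive McCormick linearizations of `G`, coincide. -/
theorem flower_eq_intersections {V : Type} [Fintype V] [DecidableEq V]
    (E : Finset (Finset V)) (hE : ∀ I ∈ E, 2 ≤ I.card) :
    flowerRel E = { z | ∀ D : RecLin V, RecLinOf D E → z ∈ projRelax D E }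
    ∧ flowerRel E
        = { z | ∀ D : RecLin V, RecLinOf D E ∧ McCormick D → z ∈ projRelax D E } := by
  have hAB : flowerRel E ⊆ { z | ∀ D : RecLin V, RecLinOf D E → z ∈ projRelax D E } :=
    fun z hz D hD => FlowerPf.flower_subset_proj hz D hD
  have hMc : { z : Finset V → ℝ |
        ∀ D : RecLin V, RecLinOf D E ∧ McCormick D → z ∈ projRelax D E }
      ⊆ flowerRel E :=
    fun z hz => ⟨FlowerPf.bounds_of_inter hE hz, FlowerPf.mono_of_inter hE hz,
      FlowerPf.flower_of_inter hE hz⟩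
  have h12 : { z : Finset V → ℝ | ∀ D : RecLin V, RecLinOf D E → z ∈ projRelax D E }
      ⊆ { z : Finset V → ℝ |
          ∀ D : RecLin V, RecLinOf D E ∧ McCormick D → z ∈ projRelax D E } :=
    fun z hz D hD => hz D hD.1
  constructor
  · exact Set.Subset.antisymm hAB (h12.trans hMc)
  · exact Set.Subset.antisymm (hAB.trans h12) hMc
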